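/- Let X be a Banach space and let U : ℝ → L(X) satisfy U(0) = I, U(s+t) = U(s)U(t) for all s, t ∈ ℝ, and suppose τ ↦ U(τ)x is continuous from ℝ to X for every x ∈ X. Set M := sup{‖U(τ)‖_{L(X)} : |τ| ≤ 3/2}, which is finite. Let g ∈ L¹(ℝ; ℂ) with support contained in [−1, 1], and let K be the operator norm on L²(ℝ; X) of the convolution operator f ↦ g * f, (g*f)(τ) = ∫_ℝ g(τ−σ) f(σ) dσ. Then the operator f ↦ (τ ↦ ∫_ℝ g(τ−σ) U(τ−σ) f(σ) dσ) is bounded on L²(ℝ; X) with operator norm at most 3 M² K. -/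

import Mathlib

/- STATEMENT 14: Lemma 7.2-type convolution estimate. If `U : ℝ → L(X)` is a strongly
continuous group of operators, `g ∈ L¹(ℝ;ℂ)` has support in `[−1,1]`, and `K` bounds the
scalar convolution operator `f ↦ g*f` on `L²(ℝ;X)`, then `f ↦ ∫ g(τ−σ)U(τ−σ)f(σ)dσ`
is bounded on `L²(ℝ;X)` with norm at most `3M²K`, where
`M = sup{‖U(τ)‖ : |τ| ≤ 3/2}`. -/

open MeasureTheory
open scoped ENNReal NNReal

lemma aux_bdd {X : Type*} [NormedAddCommGroup X] [NormedSpace ℂ X] [CompleteSpace X]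
    (U : ℝ → (X →L[ℂ] X)) (hUcont : ∀ x : X, Continuous fun τ : ℝ => U τ x) :
    BddAbove ((fun τ : ℝ => ‖U τ‖) '' {τ : ℝ | |τ| ≤ 3 / 2}) := by
  have hcpt : IsCompact {τ : ℝ | |τ| ≤ 3 / 2} := by
    have : {τ : ℝ | |τ| ≤ 3 / 2} = Set.Icc (-(3/2)) (3/2) := by
      ext τ; simp [abs_le]
    rw [this]; exact isCompact_Icc
  obtain ⟨C, hC⟩ := banach_steinhaus (ι := {τ : ℝ | |τ| ≤ 3 / 2})
    (g := fun τ => U τ.1) (fun x => by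
      obtain ⟨C, hC⟩ := (hcpt.image ((hUcont x).norm)).bddAbove
      exact ⟨max C 0, fun τ => le_max_of_le_left (hC ⟨_, τ.2, rfl⟩)⟩)
  exact ⟨C, fun y ⟨τ, hτ, hy⟩ => hy ▸ hC ⟨τ, hτ⟩⟩

lemma aux_cont {X : Type*} [NormedAddCommGroup X] [NormedSpace ℂ X] [CompleteSpace X]
    (U : ℝ → (X →L[ℂ] X))
    (hUadd : ∀ s t : ℝ, U (s + t) = U s ∘L U t)
    (hUcont : ∀ x : X, Continuous fun τ : ℝ => U τ x) :
    Continuous fun p : ℝ × X => U p.1 p.2 := by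
  -- local boundedness
  obtain ⟨M₁, hM₁⟩ : ∃ M₁, ∀ s : ℝ, |s| ≤ 3/2 → ‖U s‖ ≤ M₁ := by
    obtain ⟨M₁, hM₁⟩ := aux_bdd U hUcont
    exact ⟨M₁, fun s hs => hM₁ ⟨s, hs, rfl⟩⟩
  rw [continuous_iff_continuousAt]
  rintro ⟨t₀, x₀⟩
  have hloc : ∀ t : ℝ, |t - t₀| ≤ 1 → ‖U t‖ ≤ M₁ * ‖U t₀‖ := by
    intro t ht
    have : U t = U (t - t₀) ∘L U t₀ := by
      have := hUadd (t - t₀) t₀; rwa [sub_add_cancel] at this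
    rw [this]
    exact le_trans (ContinuousLinearMap.opNorm_comp_le _ _)
      (mul_le_mul_of_nonneg_right (hM₁ _ (ht.trans (by norm_num))) (norm_nonneg _))
  have h1 : Filter.Tendsto (fun p : ℝ × X => U p.1 (p.2 - x₀)) (nhds (t₀, x₀)) (nhds 0) := by
    refine squeeze_zero_norm' (f := fun p : ℝ × X => U p.1 (p.2 - x₀))
      (a := fun p : ℝ × X => M₁ * ‖U t₀‖ * ‖p.2 - x₀‖) ?_ ?_
    · have : ∀ᶠ p : ℝ × X in nhds (t₀, x₀), |p.1 - t₀| ≤ 1 := by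
        have : Filter.Tendsto (fun p : ℝ × X => |p.1 - t₀|) (nhds (t₀, x₀)) (nhds 0) := by
          have := (((continuous_fst (Y := X)).sub (continuous_const (y := t₀))).abs).tendsto ((t₀ : ℝ), x₀)
          simpa using this
        exact this.eventually_le_const one_pos
      filter_upwards [this] with p hp
      calc ‖U p.1 (p.2 - x₀)‖ ≤ ‖U p.1‖ * ‖p.2 - x₀‖ := (U p.1).le_opNorm _
        _ ≤ M₁ * ‖U t₀‖ * ‖p.2 - x₀‖ :=
          mul_le_mul_of_nonneg_right (hloc _ hp) (norm_nonneg _)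
    · have : Filter.Tendsto (fun p : ℝ × X => ‖p.2 - x₀‖) (nhds (t₀, x₀)) (nhds 0) := by
        have := (((continuous_snd (X := ℝ)).sub (continuous_const (y := x₀))).norm).tendsto ((t₀ : ℝ), x₀)
        simpa using this
      simpa using this.const_mul (M₁ * ‖U t₀‖)
  have h2 : Filter.Tendsto (fun p : ℝ × X => U p.1 x₀) (nhds (t₀, x₀)) (nhds (U t₀ x₀)) :=
    ((hUcont x₀).tendsto t₀).comp (continuous_fst.tendsto _)
  have := h1.add h2
  rw [zero_add] at this
  refine this.congr (fun p => ?_)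
  rw [← map_add, sub_add_cancel]


theorem stmt_14 {X : Type*} [NormedAddCommGroup X] [NormedSpace ℂ X] [CompleteSpace X]
    (U : ℝ → (X →L[ℂ] X))
    (hU0 : U 0 = 1)
    (hUadd : ∀ s t : ℝ, U (s + t) = U s ∘L U t)
    (hUcont : ∀ x : X, Continuous fun τ : ℝ => U τ x)
    (g : ℝ → ℂ) (hg : Integrable g) (hgsupp : Function.support g ⊆ Set.Icc (-1 : ℝ) 1)
    (K : ℝ) (hK0 : 0 ≤ K)
    -- K bounds the convolution operator f ↦ g * f on L²(ℝ; X)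
    (hK : ∀ f : ℝ → X, MemLp f 2 (volume : Measure ℝ) →
      MemLp (fun τ : ℝ => ∫ σ : ℝ, g (τ - σ) • f σ) 2 (volume : Measure ℝ) ∧
      eLpNorm (fun τ : ℝ => ∫ σ : ℝ, g (τ - σ) • f σ) 2 (volume : Measure ℝ) ≤
        ENNReal.ofReal K * eLpNorm f 2 (volume : Measure ℝ)) :
    -- M := sup{‖U(τ)‖ : |τ| ≤ 3/2} is finite, and
    BddAbove ((fun τ : ℝ => ‖U τ‖) '' {τ : ℝ | |τ| ≤ 3 / 2}) ∧
    -- f ↦ (τ ↦ ∫ g(τ−σ) U(τ−σ) f(σ) dσ) is bounded on L²(ℝ;X) with norm at most 3M²K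
    (∀ f : ℝ → X, MemLp f 2 (volume : Measure ℝ) →
      MemLp (fun τ : ℝ => ∫ σ : ℝ, g (τ - σ) • (U (τ - σ)) (f σ)) 2 (volume : Measure ℝ) ∧
      eLpNorm (fun τ : ℝ => ∫ σ : ℝ, g (τ - σ) • (U (τ - σ)) (f σ)) 2 (volume : Measure ℝ) ≤
        ENNReal.ofReal
          (3 * sSup ((fun τ : ℝ => ‖U τ‖) '' {τ : ℝ | |τ| ≤ 3 / 2}) ^ 2 * K) *
          eLpNorm f 2 (volume : Measure ℝ)) := by
  
  have hbdd := aux_bdd U hUcont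
  refine ⟨hbdd, ?_⟩
  set M : ℝ := sSup ((fun τ : ℝ => ‖U τ‖) '' {τ : ℝ | |τ| ≤ 3 / 2}) with hM
  rcases subsingleton_or_nontrivial X with hX | hX
  · intro f hf
    have hzero : (fun τ : ℝ => ∫ σ : ℝ, g (τ - σ) • (U (τ - σ)) (f σ)) = (fun _ : ℝ => (0:X)) :=
      funext fun τ => Subsingleton.elim _ _
    rw [hzero]
    constructor
    · exact MemLp.zero'
    · rw [show (fun _ : ℝ => (0:X)) = (0 : ℝ → X) from rfl, eLpNorm_zero]
      exact zero_le
  -- main case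
  have hMle : ∀ s : ℝ, |s| ≤ 3/2 → ‖U s‖ ≤ M := fun s hs => le_csSup hbdd ⟨s, hs, rfl⟩
  have hM1 : (1:ℝ) ≤ M := by
    have h0 : ‖U 0‖ ≤ M := hMle 0 (by norm_num)
    rwa [hU0, norm_one] at h0
  have hM0 : (0:ℝ) ≤ M := zero_le_one.trans hM1
  intro f hf
  obtain ⟨f', hf'm, hff'⟩ : ∃ f', StronglyMeasurable f' ∧ f =ᵐ[volume] f' :=
    ⟨hf.1.mk f, hf.1.stronglyMeasurable_mk, hf.1.ae_eq_mk⟩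
  obtain ⟨g', hg'm, hgg'⟩ : ∃ g', StronglyMeasurable g' ∧ g =ᵐ[volume] g' :=
    ⟨hg.1.mk g, hg.1.stronglyMeasurable_mk, hg.1.ae_eq_mk⟩
  have hf' : MemLp f' 2 volume := hf.ae_eq hff'
  have hUc2 := aux_cont U hUadd hUcont
  have hswapg : ∀ (τ : ℝ) (F : ℝ → X), (∫ σ, g (τ - σ) • F σ) = ∫ σ, g' (τ - σ) • F σ := by
    intro τ F
    apply integral_congr_ae
    have h1 := (Measure.measurePreserving_sub_left volume τ).quasiMeasurePreserving.ae_eq hgg'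
    filter_upwards [h1] with σ hσ
    simp only [Function.comp_apply] at hσ
    rw [hσ]
  have hswapf : ∀ τ : ℝ, (∫ σ, g (τ - σ) • U (τ - σ) (f σ)) = ∫ σ, g (τ - σ) • U (τ - σ) (f' σ) := by
    intro τ
    apply integral_congr_ae
    filter_upwards [hff'] with σ hσ
    rw [hσ]
  set h : ℝ → X := fun τ => ∫ σ, g (τ - σ) • U (τ - σ) (f' σ) with hhdef
  have hcongr : (fun τ : ℝ => ∫ σ : ℝ, g (τ - σ) • (U (τ - σ)) (f σ)) = h := funext hswapf
  rw [hcongr]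
  -- strong measurability of h
  have hsm : StronglyMeasurable h := by
    have e1 : h = fun τ => ∫ σ, g' (τ - σ) • U (τ - σ) (f' σ) := funext (fun τ => hswapg τ _)
    rw [e1]
    have hmeas : StronglyMeasurable (fun p : ℝ × ℝ => g' (p.1 - p.2) • U (p.1 - p.2) (f' p.2)) := by
      have h1 : StronglyMeasurable fun p : ℝ × ℝ => U (p.1 - p.2) (f' p.2) :=
        hUc2.comp_stronglyMeasurable
          (((measurable_fst.sub measurable_snd).stronglyMeasurable).prodMk
            (hf'm.comp_measurable measurable_snd))
      exact (hg'm.comp_measurable (measurable_fst.sub measurable_snd)).smul h1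
    exact hmeas.integral_prod_right'
  -- localized pieces
  set F : ℤ → ℝ → X := fun n => (Set.Icc ((n:ℝ) - 1) ((n:ℝ) + 2)).indicator
      (fun σ => U ((n:ℝ) + 1/2 - σ) (f' σ)) with hFdef
  have hFsm : ∀ n : ℤ, StronglyMeasurable (F n) := fun n =>
    (hUc2.comp_stronglyMeasurable
      (((measurable_const.sub measurable_id).stronglyMeasurable).prodMk hf'm)).indicator
      measurableSet_Icc
  have hFle : ∀ (n : ℤ) (σ : ℝ), ‖F n σ‖ ≤ M * ‖f' σ‖ := by
    intro n σ
    by_cases hσ : σ ∈ Set.Icc ((n:ℝ) - 1) ((n:ℝ) + 2)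
    · rw [hFdef]
      simp only [Set.indicator_of_mem hσ]
      refine le_trans ((U _).le_opNorm _) (mul_le_mul_of_nonneg_right (hMle _ ?_) (norm_nonneg _))
      obtain ⟨h1, h2⟩ := hσ
      rw [abs_le]; constructor <;> linarith
    · rw [hFdef]
      simp only [Set.indicator_of_notMem hσ, norm_zero]
      positivity
  have hFmem : ∀ n : ℤ, MemLp (F n) 2 volume := by
    intro n
    refine MemLp.of_le (hf'.const_smul M) ((hFsm n).aestronglyMeasurable) ?_
    filter_upwards with σ
    rw [Pi.smul_apply, norm_smul, Real.norm_eq_abs, abs_of_nonneg hM0]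
    exact hFle n σ
  -- the key pointwise identity
  have hkey : ∀ (n : ℤ) (τ : ℝ), τ ∈ Set.Ico (n:ℝ) ((n:ℝ)+1) →
      h τ = U (τ - n - 1/2) (∫ σ, g (τ - σ) • F n σ) := by
    intro n τ hτ
    obtain ⟨hτ1, hτ2⟩ := hτ
    have hintegrand : ∀ σ : ℝ, g (τ - σ) • U (τ - σ) (f' σ)
        = U (τ - n - 1/2) (g (τ - σ) • F n σ) := by
      intro σ
      by_cases hgz : g (τ - σ) = 0
      · simp [hgz]
      · have hsupp : τ - σ ∈ Set.Icc (-1:ℝ) 1 := hgsupp (Function.mem_support.2 hgz)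
        obtain ⟨hs1, hs2⟩ := hsupp
        have hσmem : σ ∈ Set.Icc ((n:ℝ) - 1) ((n:ℝ) + 2) := ⟨by linarith, by linarith⟩
        rw [ContinuousLinearMap.map_smul]
        congr 1
        rw [hFdef]
        simp only [Set.indicator_of_mem hσmem]
        rw [← ContinuousLinearMap.comp_apply, ← hUadd]
        congr 2
        ring
    show (∫ σ, g (τ - σ) • U (τ - σ) (f' σ)) = _
    simp only [hintegrand]
    by_cases hint : Integrable (fun σ => g (τ - σ) • F n σ) volume
    · exact ContinuousLinearMap.integral_comp_comm _ hint
    · rw [integral_undef hint, map_zero, integral_undef]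
      intro hcomp
      apply hint
      have h2 := (U (-(τ - n - 1/2))).integrable_comp hcomp
      have e2 : (fun σ => (U (-(τ - n - 1/2))) ((U (τ - n - 1/2)) (g (τ - σ) • F n σ)))
          = fun σ => g (τ - σ) • F n σ := by
        funext σ
        rw [← ContinuousLinearMap.comp_apply, ← hUadd, neg_add_cancel, hU0,
          ContinuousLinearMap.one_apply]
      rwa [e2] at h2
  -- lintegral machinery
  have hpair : Pairwise (Function.onFun Disjoint fun n : ℤ => Set.Ico (n : ℝ) (n + 1)) := by
    intro m n hmn
    apply Set.disjoint_left.2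
    rintro x ⟨h1, h2⟩ ⟨h3, h4⟩
    rcases hmn.lt_or_gt with hlt | hlt
    · have : (m : ℝ) + 1 ≤ n := by exact_mod_cast hlt
      linarith
    · have : (n : ℝ) + 1 ≤ m := by exact_mod_cast hlt
      linarith
  have hdecomp : ∀ G : ℝ → ℝ≥0∞, (∫⁻ τ, G τ) = ∑' n : ℤ, ∫⁻ τ in Set.Ico (n:ℝ) ((n:ℝ)+1), G τ := by
    intro G
    have h1 := lintegral_iUnion (μ := volume) (s := fun n : ℤ => Set.Ico (n:ℝ) ((n:ℝ)+1))
      (fun n => measurableSet_Ico) hpair G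
    rw [iUnion_Ico_intCast, Measure.restrict_univ] at h1
    rw [← h1]
  set Me : ℝ≥0∞ := ENNReal.ofReal M with hMe
  set Ke : ℝ≥0∞ := ENNReal.ofReal K with hKe
  set L : (ℝ → X) → ℝ≥0∞ := fun φ => ∫⁻ τ, (‖φ τ‖₊ : ℝ≥0∞) ^ (2:ℝ) with hL
  have heLp : ∀ φ : ℝ → X, eLpNorm φ 2 volume = (L φ) ^ (1/2 : ℝ) := by
    intro φ
    rw [eLpNorm_eq_lintegral_rpow_enorm_toReal two_ne_zero ENNReal.ofNat_ne_top]
    norm_num [hL, enorm_eq_nnnorm]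
  have hLsq : ∀ φ : ℝ → X, (eLpNorm φ 2 volume) ^ (2:ℝ) = L φ := by
    intro φ
    rw [heLp, ← ENNReal.rpow_mul]
    norm_num
  have hnn : ∀ (c : ℝ) (y : X), |c| ≤ 3/2 → (‖U c y‖₊ : ℝ≥0∞) ≤ Me * ‖y‖₊ := by
    intro c y hc
    rw [← enorm_eq_nnnorm, ← enorm_eq_nnnorm, ← ofReal_norm, ← ofReal_norm, hMe, ← ENNReal.ofReal_mul hM0]
    exact ENNReal.ofReal_le_ofReal (le_trans ((U c).le_opNorm y)
      (mul_le_mul_of_nonneg_right (hMle c hc) (norm_nonneg _)))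
  have hMe2top : Me ^ (2:ℝ) ≠ ⊤ :=
    ENNReal.rpow_ne_top_of_nonneg (by norm_num) ENNReal.ofReal_ne_top
  -- piece bound
  have hpiece : ∀ n : ℤ, (∫⁻ τ in Set.Ico (n:ℝ) ((n:ℝ)+1), (‖h τ‖₊ : ℝ≥0∞) ^ (2:ℝ))
      ≤ Me ^ (2:ℝ) * (Ke ^ (2:ℝ) * (L (F n))) := by
    intro n
    obtain ⟨hmemc, hlec⟩ := hK (F n) (hFmem n)
    have hstep1 : (∫⁻ τ in Set.Ico (n:ℝ) ((n:ℝ)+1), (‖h τ‖₊ : ℝ≥0∞) ^ (2:ℝ))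
        ≤ ∫⁻ τ, (Me * ‖(∫ σ, g (τ - σ) • F n σ : X)‖₊) ^ (2:ℝ) := by
      refine le_trans (setLIntegral_mono' measurableSet_Ico ?_)
        (setLIntegral_le_lintegral _ _)
      intro τ hτ
      refine ENNReal.rpow_le_rpow ?_ (by norm_num)
      rw [hkey n τ hτ]
      refine hnn _ _ ?_
      obtain ⟨hτ1, hτ2⟩ := hτ
      rw [abs_le]; constructor <;> linarith
    have hstep2 : (∫⁻ τ, (Me * ‖(∫ σ, g (τ - σ) • F n σ : X)‖₊) ^ (2:ℝ))
        = Me ^ (2:ℝ) * L (fun τ => ∫ σ, g (τ - σ) • F n σ) := by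
      simp_rw [ENNReal.mul_rpow_of_nonneg _ _ (by norm_num : (0:ℝ) ≤ 2)]
      rw [lintegral_const_mul' _ _ hMe2top]
    have hstep3 : L (fun τ => ∫ σ, g (τ - σ) • F n σ) ≤ Ke ^ (2:ℝ) * L (F n) := by
      rw [← hLsq, ← hLsq]
      calc (eLpNorm (fun τ => ∫ σ, g (τ - σ) • F n σ) 2 volume) ^ (2:ℝ)
          ≤ (Ke * eLpNorm (F n) 2 volume) ^ (2:ℝ) :=
            ENNReal.rpow_le_rpow hlec (by norm_num)
        _ = Ke ^ (2:ℝ) * (eLpNorm (F n) 2 volume) ^ (2:ℝ) :=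
            ENNReal.mul_rpow_of_nonneg _ _ (by norm_num)
    calc (∫⁻ τ in Set.Ico (n:ℝ) ((n:ℝ)+1), (‖h τ‖₊ : ℝ≥0∞) ^ (2:ℝ))
        ≤ Me ^ (2:ℝ) * L (fun τ => ∫ σ, g (τ - σ) • F n σ) := hstep2 ▸ hstep1
      _ ≤ Me ^ (2:ℝ) * (Ke ^ (2:ℝ) * L (F n)) :=
          mul_le_mul_right hstep3 _
  -- bound L (F n) by neighboring pieces of f'
  set A : ℤ → ℝ≥0∞ := fun m => ∫⁻ σ in Set.Ico (m:ℝ) ((m:ℝ)+1), (‖f' σ‖₊ : ℝ≥0∞) ^ (2:ℝ)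
    with hA
  have hLF : ∀ n : ℤ, L (F n) ≤ Me ^ (2:ℝ) * (A (n-1) + (A n + A (n+1))) := by
    intro n
    have hpt : ∀ σ : ℝ, (‖F n σ‖₊ : ℝ≥0∞) ^ (2:ℝ)
        ≤ (Set.Icc ((n:ℝ)-1) ((n:ℝ)+2)).indicator
            (fun σ => ((Me * ‖f' σ‖₊) : ℝ≥0∞) ^ (2:ℝ)) σ := by
      intro σ
      by_cases hσ : σ ∈ Set.Icc ((n:ℝ)-1) ((n:ℝ)+2)
      · rw [Set.indicator_of_mem hσ]
        refine ENNReal.rpow_le_rpow ?_ (by norm_num)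
        rw [hFdef]
        simp only [Set.indicator_of_mem hσ]
        refine hnn _ _ ?_
        obtain ⟨h1, h2⟩ := hσ
        rw [abs_le]; constructor <;> linarith
      · rw [Set.indicator_of_notMem hσ, hFdef]
        simp only [Set.indicator_of_notMem hσ, nnnorm_zero, ENNReal.coe_zero]
        rw [ENNReal.zero_rpow_of_pos (by norm_num)]
    have hIcc : L (F n) ≤ Me ^ (2:ℝ) * ∫⁻ σ in Set.Icc ((n:ℝ)-1) ((n:ℝ)+2),
        (‖f' σ‖₊ : ℝ≥0∞) ^ (2:ℝ) := by
      calc L (F n) ≤ ∫⁻ σ, (Set.Icc ((n:ℝ)-1) ((n:ℝ)+2)).indicator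
              (fun σ => ((Me * ‖f' σ‖₊) : ℝ≥0∞) ^ (2:ℝ)) σ := lintegral_mono hpt
        _ = ∫⁻ σ in Set.Icc ((n:ℝ)-1) ((n:ℝ)+2), ((Me * ‖f' σ‖₊) : ℝ≥0∞) ^ (2:ℝ) :=
            lintegral_indicator measurableSet_Icc _
        _ = Me ^ (2:ℝ) * ∫⁻ σ in Set.Icc ((n:ℝ)-1) ((n:ℝ)+2), (‖f' σ‖₊ : ℝ≥0∞) ^ (2:ℝ) := by
            simp_rw [ENNReal.mul_rpow_of_nonneg _ _ (by norm_num : (0:ℝ) ≤ 2)]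
            rw [lintegral_const_mul' _ _ hMe2top]
    refine hIcc.trans (mul_le_mul_right ?_ _)
    rw [← Measure.restrict_congr_set Ico_ae_eq_Icc]
    have hun : Set.Ico ((n:ℝ)-1) ((n:ℝ)+2)
        = (Set.Ico ((n:ℝ)-1) ((n:ℝ)) ∪ Set.Ico ((n:ℝ)) ((n:ℝ)+1)) ∪ Set.Ico ((n:ℝ)+1) ((n:ℝ)+2) := by
      rw [Set.Ico_union_Ico_eq_Ico (by linarith) (by linarith),
        Set.Ico_union_Ico_eq_Ico (by linarith) (by linarith)]
    rw [hun]
    have e1 : A (n-1) = ∫⁻ σ in Set.Ico ((n:ℝ)-1) ((n:ℝ)), (‖f' σ‖₊ : ℝ≥0∞) ^ (2:ℝ) := by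
      rw [hA]
      norm_num [show (((n-1:ℤ)):ℝ) = (n:ℝ)-1 from by push_cast; ring,
        show ((n:ℝ)-1)+1 = (n:ℝ) from by ring]
    have e3 : A (n+1) = ∫⁻ σ in Set.Ico ((n:ℝ)+1) ((n:ℝ)+2), (‖f' σ‖₊ : ℝ≥0∞) ^ (2:ℝ) := by
      rw [hA]
      norm_num [show (((n+1:ℤ)):ℝ) = (n:ℝ)+1 from by push_cast; ring,
        show ((n:ℝ)+1)+1 = (n:ℝ)+2 from by ring]
    rw [e1, e3, hA]
    refine le_trans (lintegral_union_le _ _ _) ?_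
    refine le_trans (add_le_add_left (lintegral_union_le _ _ _) _) ?_
    exact le_of_eq (add_assoc _ _ _)
  -- sum up
  set c : ℝ≥0∞ := Me ^ (2:ℝ) * Me ^ (2:ℝ) * Ke ^ (2:ℝ) with hc
  have htotal : L h ≤ (3 * c) * L f' := by
    have h1 : L h = ∑' n : ℤ, ∫⁻ τ in Set.Ico (n:ℝ) ((n:ℝ)+1), (‖h τ‖₊ : ℝ≥0∞) ^ (2:ℝ) :=
      hdecomp _
    have h2 : L h ≤ ∑' n : ℤ, c * (A (n-1) + (A n + A (n+1))) := by
      rw [h1]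
      refine ENNReal.tsum_le_tsum (fun n => ?_)
      refine le_trans (hpiece n) ?_
      calc Me ^ (2:ℝ) * (Ke ^ (2:ℝ) * L (F n))
          ≤ Me ^ (2:ℝ) * (Ke ^ (2:ℝ) * (Me ^ (2:ℝ) * (A (n-1) + (A n + A (n+1))))) :=
            mul_le_mul_right (mul_le_mul_right (hLF n) _) _
        _ = c * (A (n-1) + (A n + A (n+1))) := by rw [hc]; ring
    have h3 : (∑' n : ℤ, c * (A (n-1) + (A n + A (n+1))))
        = c * ((∑' n : ℤ, A (n-1)) + ((∑' n : ℤ, A n) + ∑' n : ℤ, A (n+1))) := by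
      rw [ENNReal.tsum_mul_left, ENNReal.tsum_add]
      congr 2
      exact ENNReal.tsum_add
    have h4 : (∑' n : ℤ, A (n-1)) = ∑' n : ℤ, A n := by
      have := (Equiv.subRight (1:ℤ)).tsum_eq A
      simpa [Equiv.subRight] using this
    have h5 : (∑' n : ℤ, A (n+1)) = ∑' n : ℤ, A n := by
      have := (Equiv.addRight (1:ℤ)).tsum_eq A
      simpa [Equiv.addRight] using this
    have h6 : (∑' n : ℤ, A n) = L f' := (hdecomp _).symm
    calc L h ≤ ∑' n : ℤ, c * (A (n-1) + (A n + A (n+1))) := h2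
      _ = c * ((∑' n : ℤ, A (n-1)) + ((∑' n : ℤ, A n) + ∑' n : ℤ, A (n+1))) := h3
      _ = c * (3 * L f') := by rw [h4, h5, h6]; ring
      _ = (3 * c) * L f' := by ring
  -- conclude
  set E : ℝ≥0∞ := ENNReal.ofReal (3 * M ^ 2 * K) with hE
  have hMe2 : Me ^ (2:ℝ) = ENNReal.ofReal (M ^ 2) := by
    rw [hMe, ENNReal.ofReal_rpow_of_nonneg hM0 (by norm_num : (0:ℝ) ≤ 2),
      show ((2:ℝ)) = ((2:ℕ):ℝ) from by norm_num, Real.rpow_natCast]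
  have hKe2 : Ke ^ (2:ℝ) = ENNReal.ofReal (K ^ 2) := by
    rw [hKe, ENNReal.ofReal_rpow_of_nonneg hK0 (by norm_num : (0:ℝ) ≤ 2),
      show ((2:ℝ)) = ((2:ℕ):ℝ) from by norm_num, Real.rpow_natCast]
  have hE2 : (3 : ℝ≥0∞) * c ≤ E ^ (2:ℝ) := by
    have hEsq : E ^ (2:ℝ) = ENNReal.ofReal ((3 * M ^ 2 * K) ^ 2) := by
      rw [hE, ENNReal.ofReal_rpow_of_nonneg (by positivity) (by norm_num : (0:ℝ) ≤ 2),
        show ((2:ℝ)) = ((2:ℕ):ℝ) from by norm_num, Real.rpow_natCast]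
    rw [hEsq]
    calc (3:ℝ≥0∞) * c = ENNReal.ofReal (3 * (M ^ 2 * M ^ 2 * K ^ 2)) := by
          rw [hc, hMe2, hKe2, ← ENNReal.ofReal_mul (by positivity : (0:ℝ) ≤ M ^ 2),
            ← ENNReal.ofReal_mul (by positivity : (0:ℝ) ≤ M ^ 2 * M ^ 2),
            show ((3:ℝ≥0∞)) = ENNReal.ofReal 3 from by simp,
            ← ENNReal.ofReal_mul (by norm_num : (0:ℝ) ≤ 3)]
      _ ≤ ENNReal.ofReal ((3 * M ^ 2 * K) ^ 2) := ENNReal.ofReal_le_ofReal (by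
          nlinarith [mul_nonneg (mul_nonneg (sq_nonneg M) (sq_nonneg M)) (sq_nonneg K)])
  have hfinal : eLpNorm h 2 volume ≤ E * eLpNorm f' 2 volume := by
    rw [heLp h, heLp f']
    calc (L h) ^ (1/2:ℝ) ≤ (E ^ (2:ℝ) * L f') ^ (1/2:ℝ) := by
          refine ENNReal.rpow_le_rpow (htotal.trans (mul_le_mul_left hE2 _)) (by norm_num)
      _ = E * (L f') ^ (1/2:ℝ) := by
          rw [ENNReal.mul_rpow_of_nonneg _ _ (by norm_num : (0:ℝ) ≤ 1/2),
            ← ENNReal.rpow_mul]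
          norm_num
  have hffeq : eLpNorm f 2 (volume : Measure ℝ) = eLpNorm f' 2 volume :=
    eLpNorm_congr_ae hff'
  rw [hffeq]
  refine ⟨⟨hsm.aestronglyMeasurable, ?_⟩, hfinal⟩
  exact lt_of_le_of_lt hfinal (ENNReal.mul_lt_top ENNReal.ofReal_lt_top hf'.2)
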